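/- arXiv:1903.09238 — 2 statements merged into one kernel-verified Lean document; each statement's English description precedes it below -/
import Mathlib

section
/- For strings x and y with |y| ≥ |x| ≥ 0 and |y| > 0, the Normalized Levenshtein Distance satisfies 1 − |x|/|y| ≤ NLD(x,y) ≤ 2/(|x|/|y| + 2). -/
variable {α : Type*} [Fintype α] [DecidableEq α]

/-- Cost structure for edit distance (was `Levenshtein.Cost` in Mathlib, since removed). -/
structure Levenshtein.Cost (α' β' δ : Type*) where
  delete : α' → δ
  insert : β' → δ
  substitute : α' → β' → δ

/-- Default unit costs (was `Levenshtein.defaultCost` in Mathlib, since removed). -/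
def Levenshtein.defaultCost {γ : Type*} [DecidableEq γ] : Levenshtein.Cost γ γ ℕ where
  delete _ := 1
  insert _ := 1
  substitute a b := if a = b then 0 else 1

/-- Levenshtein distance with cost `C` (was `levenshtein` in Mathlib, since removed);
given by the recursion Mathlib proved for it. -/
def levenshtein {α' β' δ : Type*} [AddZeroClass δ] [Min δ] (C : Levenshtein.Cost α' β' δ) :
    List α' → List β' → δ
  | [], ys => (ys.map C.insert).sum
  | x :: xs, [] => ((x :: xs).map C.delete).sum
  | x :: xs, y :: ys =>
    min (C.delete x + levenshtein C xs (y :: ys))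
      (min (C.insert y + levenshtein C (x :: xs) ys) (C.substitute x y + levenshtein C xs ys))

/-- Levenshtein distance: the minimum number of single-character insertions,
deletions, and substitutions transforming one string into another. -/
def LD (x y : List α) : ℕ := levenshtein Levenshtein.defaultCost x y

/-- Normalized Levenshtein distance. -/
noncomputable def NLD (x y : List α) : ℝ :=
  2 * LD x y / (x.length + y.length + LD x y)

lemma LD_nil_right (x : List α) : LD x [] = x.length := by
  induction x with
  | nil => simp [LD, levenshtein]
  | cons a xs ih => simp_all [LD, levenshtein, Levenshtein.defaultCost]; omega

lemma LD_nil_left (y : List α) : LD [] y = y.length := by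
  induction y with
  | nil => simp [LD, levenshtein]
  | cons b ys ih => simp_all [LD, levenshtein, Levenshtein.defaultCost]; omega

lemma LD_le_max (x y : List α) : LD x y ≤ max x.length y.length := by
  induction x generalizing y with
  | nil => simp [LD_nil_left]
  | cons a xs ih =>
    cases y with
    | nil => simp [LD_nil_right]
    | cons b ys =>
      have h := ih ys
      calc LD (a :: xs) (b :: ys) ≤ (if a = b then 0 else 1) + LD xs ys := by
            simp only [LD, levenshtein, Levenshtein.defaultCost]
            exact le_trans (min_le_right _ _) (min_le_right _ _)
        _ ≤ max (a :: xs).length (b :: ys).length := by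
            simp only [List.length_cons]; split <;> omega

lemma length_le_LD (x y : List α) : y.length ≤ x.length + LD x y := by
  induction y generalizing x with
  | nil => simp
  | cons b ys ihy =>
    induction x with
    | nil => simp [LD_nil_left]
    | cons a xs ihx =>
      have h1 : (b :: ys).length ≤ xs.length + LD xs (b :: ys) := ihx
      have h2 : ys.length ≤ (a :: xs).length + LD (a :: xs) ys := ihy (a :: xs)
      have h3 : ys.length ≤ xs.length + LD xs ys := ihy xs
      have e : LD (a :: xs) (b :: ys) =
          min (1 + LD xs (b :: ys))
            (min (1 + LD (a :: xs) ys) ((if a = b then 0 else 1) + LD xs ys)) := by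
        simp only [LD, levenshtein, Levenshtein.defaultCost]
      rw [e]
      simp only [List.length_cons] at *
      split at e <;> omega

theorem NLD_bounds (x y : List α) (h : x.length ≤ y.length) (hy : 0 < y.length) :
    1 - (x.length : ℝ) / y.length ≤ NLD x y ∧
    NLD x y ≤ 2 / ((x.length : ℝ) / y.length + 2) := by
  have key : ∀ n m L : ℝ, 0 ≤ n → n ≤ m → 0 < m → 0 ≤ L → m - n ≤ L → L ≤ m →
      1 - n / m ≤ 2 * L / (n + m + L) ∧ 2 * L / (n + m + L) ≤ 2 / (n / m + 2) := by
    intro n m L hn0 hnm hm0 hL0 hLge hLle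
    have hd : (0:ℝ) < n + m + L := by linarith
    constructor
    · have h1 : 1 - n / m = (m - n) / m := by field_simp
      rw [h1, div_le_div_iff₀ hm0 hd]
      nlinarith [mul_nonneg (sub_nonneg.2 hLge) (by linarith : (0:ℝ) ≤ m + n)]
    · have h2 : 2 / (n / m + 2) = 2 * m / (n + 2 * m) := by
        rw [div_eq_div_iff (by positivity) (by linarith)]
        field_simp
      rw [h2, div_le_div_iff₀ hd (by linarith)]
      nlinarith [mul_nonneg (sub_nonneg.2 hLle) (by linarith : (0:ℝ) ≤ n + m)]
  have hm0 : (0:ℝ) < y.length := by exact_mod_cast hy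
  have hLle : (LD x y : ℝ) ≤ y.length := by
    have := LD_le_max x y
    rw [max_eq_right h] at this
    exact_mod_cast this
  have hLge : (y.length : ℝ) - x.length ≤ LD x y := by
    have := length_le_LD x y
    have : (y.length : ℝ) ≤ x.length + LD x y := by exact_mod_cast this
    linarith
  exact key x.length y.length (LD x y) (by positivity) (by exact_mod_cast h) hm0
    (by positivity) hLge hLle
end

section
/- Abstract triangle-inequality transfer lemma for NSLD: let a = NSLD(X,Y), b = NSLD(Y,Z), c = NSLD(X,Z) be reals in [0,1) with a < c and b < c, and let Lx, Ly, Lz > 0 be reals satisfying (a/(2−a))·(Lx+Ly) + (b/(2−b))·(Ly+Lz) ≥ (c/(2−c))·(Lx+Lz), Lx ≥ (1−a)·Ly, and Lz ≥ (1−b)·Ly. Then a + b ≥ c. -/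
theorem nsld_triangle_core (a b c Lx Ly Lz : ℝ)
    (ha : a ∈ Set.Ico (0 : ℝ) 1) (hb : b ∈ Set.Ico (0 : ℝ) 1)
    (hc : c ∈ Set.Ico (0 : ℝ) 1)
    (hac : a < c) (hbc : b < c)
    (hLx : 0 < Lx) (hLy : 0 < Ly) (hLz : 0 < Lz)
    (htri : a / (2 - a) * (Lx + Ly) + b / (2 - b) * (Ly + Lz) ≥
      c / (2 - c) * (Lx + Lz))
    (hx : Lx ≥ (1 - a) * Ly) (hz : Lz ≥ (1 - b) * Ly) :
    a + b ≥ c := by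
  obtain ⟨ha0, ha1⟩ := ha
  obtain ⟨hb0, hb1⟩ := hb
  obtain ⟨hc0, hc1⟩ := hc
  have h2a : (0:ℝ) < 2 - a := by linarith
  have h2b : (0:ℝ) < 2 - b := by linarith
  have h2c : (0:ℝ) < 2 - c := by linarith
  by_contra h
  push_neg at h
  -- clear denominators in htri
  have htri' : a * (2 - b) * (2 - c) * (Lx + Ly) + b * (2 - a) * (2 - c) * (Ly + Lz) ≥
      c * (2 - a) * (2 - b) * (Lx + Lz) := by
    rw [ge_iff_le, div_mul_eq_mul_div, div_mul_eq_mul_div, div_mul_eq_mul_div,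
      div_add_div _ _ h2a.ne' h2b.ne', div_le_div_iff₀ h2c (by positivity)] at htri
    nlinarith [htri]
  have hs : 0 < c - a - b := by linarith
  have hu : 0 ≤ Lx - (1 - a) * Ly := by linarith
  have hv : 0 ≤ Lz - (1 - b) * Ly := by linarith
  nlinarith [mul_nonneg (mul_nonneg hu h2b.le) (by linarith : (0:ℝ) ≤ (c - a - b) + b),
    mul_nonneg (mul_nonneg hv h2a.le) (by linarith : (0:ℝ) ≤ (c - a - b) + a),
    mul_pos (mul_pos (mul_pos hs hLy) h2a) h2b]
end
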